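/- arXiv:math/0302309 — 2 statements merged into one kernel-verified Lean document; each statement's English description precedes it below -/
import Mathlib

section
/- Let (W,S) be a finite Coxeter system, I,J ⊆ S, and b ∈ X_{IJ} such that bJb^{-1} ⊆ I (i.e. btb^{-1} ∈ I for every t ∈ J, elements of S regarded as reflections). Then |W(I,J,b)| = |W(J,I,b^{-1})| = |W_I| / |W_J|. -/
open scoped Classical

variable {B : Type*} {W : Type*} [Group W] {M : CoxeterMatrix B}

/-- The parabolic subgroup `W_I` generated by the simple reflections indexed by `I`. -/
def parabolic (cs : CoxeterSystem M W) (I : Set B) : Subgroup W :=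
  Subgroup.closure (cs.simple '' I)

/-- `X_I`: minimal length coset representatives of `W / W_I`. -/
def minReps (cs : CoxeterSystem M W) (I : Set B) : Set W :=
  {w : W | ∀ i ∈ I, cs.length w < cs.length (w * cs.simple i)}

/-- `I ∼_W J`: the subsets of simple reflections are conjugate under `W`. -/
def ConjSubsets (cs : CoxeterSystem M W) (I J : Set B) : Prop :=
  ∃ w : W, (fun x => w * x * w⁻¹) '' (cs.simple '' I) = cs.simple '' J

theorem conjSubsets_equivalence (cs : CoxeterSystem M W) : Equivalence (ConjSubsets cs) where
  refl I := ⟨1, by simp⟩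
  symm := by
    rintro I J ⟨w, h⟩
    refine ⟨w⁻¹, ?_⟩
    rw [← h, Set.image_image]
    simp [mul_assoc]
  trans := by
    rintro I J K ⟨w, h⟩ ⟨v, h'⟩
    refine ⟨v * w, ?_⟩
    rw [← h', ← h]
    simp [Set.image_image, mul_assoc]

/-- The setoid of Coxeter classes. -/
def coxSetoid (cs : CoxeterSystem M W) : Setoid (Set B) :=
  ⟨ConjSubsets cs, conjSubsets_equivalence cs⟩

/-- The set of Coxeter classes `Λ(W)`. -/
def CoxeterClass (cs : CoxeterSystem M W) := Quotient (coxSetoid cs)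

/-- `C` is a conjugacy class of the parabolic subgroup `W_I`. -/
def IsConjClassOfParabolic (cs : CoxeterSystem M W) (I : Set B) (C : Set W) : Prop :=
  ∃ v ∈ parabolic cs I, C = {x : W | ∃ u ∈ parabolic cs I, u * v * u⁻¹ = x}

/-- `C` is an `I`-cuspidal class: a conjugacy class of `W_I` meeting no proper
parabolic subgroup of `W_I`. -/
def IsCuspidalClass (cs : CoxeterSystem M W) (I : Set B) (C : Set W) : Prop :=
  IsConjClassOfParabolic cs I C ∧ ∀ K : Set B, K ⊂ I → C ∩ (parabolic cs K : Set W) = ∅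

/-- `w` is an `I`-element: `C(w) ∩ W_I` is an `I`-cuspidal class. -/
def IsElementOf (cs : CoxeterSystem M W) (I : Set B) (w : W) : Prop :=
  IsCuspidalClass cs I ({x : W | IsConj w x} ∩ (parabolic cs I : Set W))

/-- The λ-set `C(λ)` of the Coxeter class of `I`: the set of `λ(I)`-elements. -/
def lambdaSet (cs : CoxeterSystem M W) (I : Set B) : Set W :=
  {w : W | ∃ J : Set B, ConjSubsets cs I J ∧ IsElementOf cs J w}

/-- The λ-set of a Coxeter class. -/
def lambdaSetQ (cs : CoxeterSystem M W) (lam : CoxeterClass cs) : Set W :=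
  {w : W | ∃ I : Set B, Quotient.mk (coxSetoid cs) I = lam ∧ IsElementOf cs I w}

/-- The induced character `1_{W_I}^W` of the trivial character of `W_I`,
as a `ℚ`-valued function on `W`. -/
noncomputable def indTriv (cs : CoxeterSystem M W) (I : Set B) : W → ℚ :=
  fun w => (Nat.card {g : W | g ∈ minReps cs I ∧ g⁻¹ * w * g ∈ parabolic cs I} : ℚ)


/-- `X_{IJ} = X_I⁻¹ ∩ X_J`: the minimal length representatives of the double cosets
`W_I \\ W / W_J`. -/
def doubleReps (cs : CoxeterSystem M W) (I J : Set B) : Set W :=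
  (minReps cs I)⁻¹ ∩ minReps cs J

/-- `W(I,J,b) = {w ∈ W | w^J b⁻¹ = (w b⁻¹)_I}`, expressed through the (unique) parabolic
components `w = u·c` (`u ∈ X_J`, `c ∈ W_J`) and `w b⁻¹ = p·q` (`p ∈ X_I`, `q ∈ W_I`). -/
def Wset (cs : CoxeterSystem M W) (I J : Set B) (b : W) : Set W :=
  {w : W | ∃ u c p q : W,
    u ∈ minReps cs J ∧ c ∈ parabolic cs J ∧ w = u * c ∧
    p ∈ minReps cs I ∧ q ∈ parabolic cs I ∧ w * b⁻¹ = p * q ∧ u * b⁻¹ = q}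

namespace CoxAux

variable {B : Type*} {W : Type*} [Group W] {M : CoxeterMatrix B} (cs : CoxeterSystem M W)

local prefix:100 "σσ" => cs.simple
local prefix:100 "ππ" => cs.wordProd
local prefix:100 "ℓℓ" => cs.length

/-- The sign-twisting involution used to establish the strong exchange property. -/
noncomputable def sigma (i : B) : Equiv.Perm (W × ZMod 2) :=
  Function.Involutive.toPerm
    (fun x => (cs.simple i * x.1 * cs.simple i, x.2 + if x.1 = cs.simple i then 1 else 0))
    (by
      rintro ⟨t, ε⟩
      have hc : (cs.simple i * t * cs.simple i = cs.simple i) ↔ t = cs.simple i := by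
        constructor
        · intro hh
          have := congrArg (fun z => cs.simple i * z * cs.simple i) hh
          simpa [mul_assoc] using this
        · intro hh; rw [hh]; simp
      dsimp only
      rw [Prod.mk.injEq]
      constructor
      · simp [mul_assoc]
      · by_cases h : t = cs.simple i
        · rw [if_pos h, if_pos (hc.mpr h), add_assoc]
          have h11 : (1 + 1 : ZMod 2) = 0 := rfl
          rw [h11, add_zero]
        · rw [if_neg h, if_neg (fun hh => h (hc.mp hh)), add_zero, add_zero])

lemma sigma_apply (i : B) (t : W) (ε : ZMod 2) :
    sigma cs i (t, ε) = (cs.simple i * t * cs.simple i, ε + if t = cs.simple i then 1 else 0) :=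
  rfl

lemma rightInvSeq_cons (i : B) (ω : List B) :
    cs.rightInvSeq (i :: ω) = ((ππ ω)⁻¹ * σσ i * ππ ω) :: cs.rightInvSeq ω := rfl

lemma prod_map_sigma (ω : List B) (t : W) (ε : ZMod 2) :
    ((ω.map (sigma cs)).prod) (t, ε)
      = (ππ ω * t * (ππ ω)⁻¹, ε + ((cs.rightInvSeq ω).count t : ZMod 2)) := by
  induction ω generalizing ε with
  | nil => simp
  | cons i ω ih =>
      rw [List.map_cons, List.prod_cons, Equiv.Perm.mul_apply, ih, sigma_apply,
        rightInvSeq_cons]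
      have hcond : (ππ ω * t * (ππ ω)⁻¹ = cs.simple i) ↔ (t = (ππ ω)⁻¹ * σσ i * ππ ω) := by
        constructor
        · intro h
          rw [← h]; group
        · intro h
          rw [h]; group
      rw [List.count_cons]
      refine Prod.ext ?_ ?_
      · simp [CoxeterSystem.wordProd_cons, mul_assoc]
      · simp only [Nat.cast_add]
        have : ((if ((ππ ω)⁻¹ * σσ i * ππ ω) == t then 1 else 0 : ℕ) : ZMod 2)
            = (if ππ ω * t * (ππ ω)⁻¹ = cs.simple i then 1 else 0) := by
          rw [hcond]
          by_cases h : t = (ππ ω)⁻¹ * σσ i * ππ ω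
          · simp [h]
          · have h' : ((((ππ ω)⁻¹ * σσ i * ππ ω) == t) : Bool) = false := by
              rw [beq_eq_false_iff_ne]
              exact fun hc => h hc.symm
            rw [if_neg h, h']
            simp
        rw [this]
        ring

lemma prod_map_alternatingWord {G : Type*} [Monoid G] (f : B → G) (i j : B) (m : ℕ) :
    ((CoxeterSystem.alternatingWord i j (2 * m)).map f).prod = (f i * f j) ^ m := by
  induction m with
  | zero => simp [CoxeterSystem.alternatingWord]
  | succ m ih =>
      have h2 : 2 * (m + 1) = (2 * m + 1) + 1 := by ring
      rw [h2, CoxeterSystem.alternatingWord_succ', CoxeterSystem.alternatingWord_succ']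
      have he : ¬ Even (2 * m + 1) := by simp [Nat.even_add_one, parity_simps]
      have he2 : Even (2 * m) := even_two_mul m
      rw [if_neg he, if_pos he2]
      rw [List.map_cons, List.map_cons, List.prod_cons, List.prod_cons, ih, pow_succ']
      rw [mul_assoc]

lemma alternatingWord_drop (i j : B) : ∀ (d n : ℕ),
    (CoxeterSystem.alternatingWord i j n).drop d = CoxeterSystem.alternatingWord i j (n - d) := by
  intro d
  induction d with
  | zero => intro n; simp
  | succ d ih =>
      intro n
      cases n with
      | zero => simp [CoxeterSystem.alternatingWord]
      | succ n =>
          rw [CoxeterSystem.alternatingWord_succ', List.drop_succ_cons, ih]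
          congr 1
          omega

lemma getD_ris (ω : List B) (k : ℕ) :
    (cs.rightInvSeq ω).getD k 1 = (ππ (ω.drop (k + 1)))⁻¹ * ππ (ω.drop k) := by
  rw [cs.getD_rightInvSeq]
  rcases lt_or_ge k ω.length with h | h
  · rw [show ω.drop k = ω[k] :: ω.drop (k + 1) from List.drop_eq_getElem_cons h]
    rw [CoxeterSystem.wordProd_cons]
    have : ω[k]? = some ω[k] := by
      rw [List.getElem?_eq_getElem h]
    rw [this]
    simp [mul_assoc]
  · have h1 : ω.drop k = [] := List.drop_eq_nil_of_le h
    have h2 : ω.drop (k + 1) = [] := List.drop_eq_nil_of_le (by omega)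
    have h3 : ω[k]? = none := List.getElem?_eq_none h
    rw [h1, h2, h3]
    simp

lemma g_formula (i j : B) (q : ℕ) :
    (ππ (CoxeterSystem.alternatingWord i j q))⁻¹ * ππ (CoxeterSystem.alternatingWord i j (q + 1))
      = ((σσ i * σσ j) ^ q)⁻¹ * σσ j := by
  set p := σσ i * σσ j with hp
  have hswap : ∀ r : ℕ, σσ j * p ^ r = (p ^ r)⁻¹ * σσ j := by
    intro r
    have h1 : σσ j * p * (σσ j)⁻¹ = p⁻¹ := by
      rw [hp]
      simp [mul_assoc]
    calc σσ j * p ^ r = (σσ j * p ^ r * (σσ j)⁻¹) * σσ j := by group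
      _ = ((σσ j * p * (σσ j)⁻¹) ^ r) * σσ j := by rw [conj_pow]
      _ = (p ^ r)⁻¹ * σσ j := by rw [h1, inv_pow]
  rcases Nat.even_or_odd q with he | ho
  · obtain ⟨a, rfl⟩ := he
    have hq2 : (a + a) / 2 = a := by omega
    have hq12 : (a + a + 1) / 2 = a := by omega
    rw [cs.prod_alternatingWord_eq_mul_pow, cs.prod_alternatingWord_eq_mul_pow]
    rw [if_pos ⟨a, rfl⟩, if_neg (by simp [Nat.even_add_one, parity_simps]), hq2, hq12]
    rw [one_mul, hswap, ← hp, ← mul_assoc, ← mul_inv_rev, ← pow_add]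
  · obtain ⟨a, rfl⟩ := ho
    have hq2 : (2 * a + 1) / 2 = a := by omega
    have hq12 : (2 * a + 1 + 1) / 2 = a + 1 := by omega
    rw [cs.prod_alternatingWord_eq_mul_pow, cs.prod_alternatingWord_eq_mul_pow]
    rw [if_neg (by simp [Nat.even_add_one, parity_simps]), if_pos (by exact ⟨a + 1, by ring⟩),
      hq2, hq12]
    rw [one_mul, mul_inv_rev, CoxeterSystem.inv_simple, mul_assoc, hswap, ← hp, ← mul_assoc,
      ← mul_inv_rev, ← pow_add]
    have e3 : a + 1 + a = 2 * a + 1 := by omega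
    rw [e3]

lemma ris_alt_getD (i j : B) (n k : ℕ) (hk : k < n) :
    (cs.rightInvSeq (CoxeterSystem.alternatingWord i j n)).getD k 1
      = (((σσ i * σσ j) ^ (n - k - 1))⁻¹ * σσ j) := by
  rw [getD_ris, alternatingWord_drop, alternatingWord_drop]
  have e1 : n - (k + 1) = n - k - 1 := by omega
  have e2 : n - k = (n - k - 1) + 1 := by omega
  rw [e1, e2]
  exact g_formula cs i j (n - k - 1)

lemma count_ris_alt_even (i j : B) (t : W) :
    Even ((cs.rightInvSeq (CoxeterSystem.alternatingWord i j (2 * M i j))).count t) := by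
  set m := M i j with hm
  set l := cs.rightInvSeq (CoxeterSystem.alternatingWord i j (2 * m)) with hl
  have hlen : l.length = 2 * m := by
    rw [hl, CoxeterSystem.length_rightInvSeq, CoxeterSystem.length_alternatingWord]
  have htd : l.take m = l.drop m := by
    apply List.ext_getElem
    · rw [List.length_take, List.length_drop, hlen]; omega
    · intro k h1 h2
      rw [List.length_take, hlen] at h1
      have hk : k < m := by omega
      rw [List.getElem_take, List.getElem_drop]
      rw [← List.getD_eq_getElem l 1 (by rw [hlen]; omega),
        ← List.getD_eq_getElem l 1 (by rw [hlen]; omega)]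
      rw [hl, ris_alt_getD cs i j _ k (by omega), ris_alt_getD cs i j _ (m + k) (by omega)]
      have e : 2 * m - k - 1 = (2 * m - (m + k) - 1) + m := by omega
      rw [e, pow_add, hm, cs.simple_mul_simple_pow i j, mul_one]
  have hsplit : l = l.take m ++ l.drop m := (List.take_append_drop m l).symm
  rw [hsplit, List.count_append, ← htd]
  exact ⟨_, rfl⟩

lemma sigma_liftable : M.IsLiftable (sigma cs) := by
  intro i j
  have h1 : (sigma cs i * sigma cs j) ^ M i j
      = ((CoxeterSystem.alternatingWord i j (2 * M i j)).map (sigma cs)).prod :=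
    (prod_map_alternatingWord (sigma cs) i j (M i j)).symm
  rw [h1]
  apply Equiv.ext
  rintro ⟨t, ε⟩
  rw [prod_map_sigma]
  have hπ : ππ (CoxeterSystem.alternatingWord i j (2 * M i j)) = 1 := by
    have h2 := prod_map_alternatingWord cs.simple i j (M i j)
    rw [CoxeterSystem.wordProd, h2, cs.simple_mul_simple_pow i j]
  obtain ⟨c, hc⟩ := count_ris_alt_even cs i j t
  rw [hπ, hc]
  have hcast : ((c + c : ℕ) : ZMod 2) = 0 := by
    push_cast
    ring_nf
    rw [show (2 : ZMod 2) = 0 from rfl, mul_zero]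
  rw [hcast, add_zero]
  simp

/-- The homomorphism `W →* Perm (W × ZMod 2)` tracking inversion parity. -/
noncomputable def phi : W →* Equiv.Perm (W × ZMod 2) :=
  cs.lift ⟨sigma cs, sigma_liftable cs⟩

/-- `η w t`: the parity of the number of times `t` occurs in the right inversion sequence
of any word for `w`. -/
noncomputable def eta (w t : W) : ZMod 2 := (phi cs w (t, 0)).2

lemma phi_simple (i : B) : phi cs (σσ i) = sigma cs i :=
  cs.lift_apply_simple (sigma_liftable cs) i

lemma phi_wordProd (ω : List B) (t : W) (ε : ZMod 2) :
    phi cs (ππ ω) (t, ε) = (ππ ω * t * (ππ ω)⁻¹, ε + ((cs.rightInvSeq ω).count t : ZMod 2)) := by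
  have h1 : phi cs (ππ ω) = ((ω.map (sigma cs)).prod) := by
    rw [CoxeterSystem.wordProd, map_list_prod, List.map_map]
    congr 1
    apply List.map_congr_left
    intro i _
    exact phi_simple cs i
  rw [h1, prod_map_sigma]

lemma eta_count (ω : List B) (t : W) :
    eta cs (ππ ω) t = ((cs.rightInvSeq ω).count t : ZMod 2) := by
  rw [eta, phi_wordProd, zero_add]

lemma phi_apply (w t : W) (ε : ZMod 2) :
    phi cs w (t, ε) = (w * t * w⁻¹, ε + eta cs w t) := by
  obtain ⟨ω, rfl⟩ := cs.wordProd_surjective w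
  rw [phi_wordProd, eta_count]

lemma eta_mul_self (w t : W) (ht : cs.IsReflection t) :
    eta cs (w * t) t = eta cs w t + 1 := by
  obtain ⟨u, i, rfl⟩ := ht
  set t := u * σσ i * u⁻¹ with hht
  have hphiu : phi cs u⁻¹ (t, (0 : ZMod 2)) = (σσ i, eta cs u⁻¹ t) := by
    rw [phi_apply]
    congr 1
    rw [hht]
    group
  have hzero : eta cs u⁻¹ t + eta cs u (σσ i) = 0 := by
    have h0 : phi cs u (phi cs u⁻¹ (t, (0 : ZMod 2))) = (t, 0) := by
      rw [← Equiv.Perm.mul_apply, ← map_mul, mul_inv_cancel, map_one, Equiv.Perm.one_apply]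
    rw [hphiu, phi_apply] at h0
    have := congrArg Prod.snd h0
    simpa using this
  have hkey : phi cs t (t, (0 : ZMod 2)) = (t, 1) := by
    have hsplit : phi cs t = phi cs u * phi cs (σσ i) * phi cs u⁻¹ := by
      rw [← map_mul, ← map_mul, hht]
    rw [hsplit, Equiv.Perm.mul_apply, Equiv.Perm.mul_apply, hphiu, phi_simple, sigma_apply,
      if_pos rfl]
    have hsss : σσ i * σσ i * σσ i = σσ i := by simp
    rw [hsss, phi_apply]
    congr 1
    rw [add_assoc, add_comm (1 : ZMod 2), ← add_assoc, hzero, zero_add]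
  show (phi cs (w * t) (t, 0)).2 = _
  rw [map_mul, Equiv.Perm.mul_apply, hkey, phi_apply]
  exact add_comm 1 _

lemma length_lt_of_eta_one (w t : W) (h : eta cs w t = 1) : ℓℓ (w * t) < ℓℓ w := by
  obtain ⟨ω, hred, rfl⟩ := cs.exists_reduced_word' w
  have hc : ((cs.rightInvSeq ω).count t : ZMod 2) = 1 := by rw [← eta_count]; exact h
  have hmem : t ∈ cs.rightInvSeq ω := by
    by_contra hm
    rw [List.count_eq_zero_of_not_mem hm] at hc
    simp at hc
  exact (cs.isRightInversion_of_mem_rightInvSeq hred hmem).2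

lemma eta_one_of_lt (w t : W) (ht : cs.IsReflection t) (hlt : ℓℓ (w * t) < ℓℓ w) :
    eta cs w t = 1 := by
  have h01 : ∀ x : ZMod 2, x = 0 ∨ x = 1 := by decide
  rcases h01 (eta cs w t) with h0 | h1
  · exfalso
    have h2 : eta cs (w * t) t = 1 := by rw [eta_mul_self cs w t ht, h0, zero_add]
    have h3 := length_lt_of_eta_one cs (w * t) t h2
    rw [mul_assoc, ht.mul_self, mul_one] at h3
    omega
  · exact h1

lemma mem_ris_of_lt (ω : List B) (t : W) (ht : cs.IsReflection t)
    (hlt : ℓℓ (ππ ω * t) < ℓℓ (ππ ω)) : t ∈ cs.rightInvSeq ω := by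
  have h1 : eta cs (ππ ω) t = 1 := eta_one_of_lt cs _ t ht hlt
  rw [eta_count] at h1
  by_contra hm
  rw [List.count_eq_zero_of_not_mem hm] at h1
  simp at h1

/-- Strong exchange property. -/
lemma strong_exchange (ω : List B) (t : W) (ht : cs.IsReflection t)
    (hlt : ℓℓ (ππ ω * t) < ℓℓ (ππ ω)) :
    ∃ k, k < ω.length ∧ ππ (ω.eraseIdx k) = ππ ω * t := by
  have hmem := mem_ris_of_lt cs ω t ht hlt
  obtain ⟨k, hk, hget⟩ := List.mem_iff_getElem.mp hmem
  have hk' : k < ω.length := by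
    rw [CoxeterSystem.length_rightInvSeq] at hk
    exact hk
  refine ⟨k, hk', ?_⟩
  rw [← cs.wordProd_mul_getD_rightInvSeq ω k]
  congr 1
  rw [List.getD_eq_getElem _ 1 hk, hget]

/-- Deletion property. -/
lemma deletion (ω : List B) (hnr : ¬ cs.IsReduced ω) :
    ∃ ω' : List B, ππ ω' = ππ ω ∧ ω'.length + 2 = ω.length ∧ ∀ x ∈ ω', x ∈ ω := by
  have hne : ω ≠ [] := by
    rintro rfl
    exact hnr (by simp [CoxeterSystem.IsReduced])
  have hlen1 : 1 ≤ ω.length := List.length_pos_iff.mpr hne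
  have hP : ∃ k, ¬ cs.IsReduced (ω.take (k + 1)) :=
    ⟨ω.length - 1, by rwa [show ω.length - 1 + 1 = ω.length by omega, List.take_length]⟩
  set k := Nat.find hP with hkdef
  have hk : ¬ cs.IsReduced (ω.take (k + 1)) := Nat.find_spec hP
  have hklt : k < ω.length := by
    have h2 : k ≤ ω.length - 1 := Nat.find_le
      (by rwa [show ω.length - 1 + 1 = ω.length by omega, List.take_length])
    omega
  have hred : cs.IsReduced (ω.take k) := by
    rcases Nat.eq_zero_or_pos k with h0 | hpos
    · rw [h0]
      show ℓℓ (ππ (ω.take 0)) = _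
      simp
    · have := Nat.find_min hP (show k - 1 < k by omega)
      rw [show k - 1 + 1 = k by omega] at this
      exact not_not.mp this
  have htake : ω.take (k + 1) = ω.take k ++ [ω[k]] := by
    rw [List.take_succ, List.getElem?_eq_getElem hklt]
    rfl
  have hlen_take : (ω.take k).length = k := by rw [List.length_take]; omega
  have hπ1 : ππ (ω.take (k + 1)) = ππ (ω.take k) * σσ ω[k] := by
    rw [htake, CoxeterSystem.wordProd_append, CoxeterSystem.wordProd_singleton]
  have hlred : ℓℓ (ππ (ω.take k)) = k := hred.trans hlen_take
  have hdesc : ℓℓ (ππ (ω.take k) * σσ ω[k]) < ℓℓ (ππ (ω.take k)) := by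
    rcases cs.length_mul_simple (ππ (ω.take k)) ω[k] with h | h
    · exfalso
      apply hk
      show ℓℓ (ππ (ω.take (k + 1))) = (ω.take (k + 1)).length
      rw [hπ1, h, hlred, List.length_take]
      omega
    · omega
  obtain ⟨q, hqlt, hq⟩ := strong_exchange cs (ω.take k) (σσ ω[k])
    (cs.isReflection_simple _) hdesc
  rw [hlen_take] at hqlt
  refine ⟨(ω.take k).eraseIdx q ++ ω.drop (k + 1), ?_, ?_, ?_⟩
  · rw [CoxeterSystem.wordProd_append, hq, ← hπ1]
    rw [← CoxeterSystem.wordProd_append, List.take_append_drop]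
  · rw [List.length_append, List.length_eraseIdx_of_lt (by rw [hlen_take]; exact hqlt),
      hlen_take, List.length_drop]
    omega
  · intro x hx
    rcases List.mem_append.mp hx with h | h
    · exact List.mem_of_mem_take (List.mem_of_mem_eraseIdx h)
    · exact List.mem_of_mem_drop h

/-! ### Parabolic subgroups -/

lemma mem_parabolic_iff (J : Set B) (w : W) :
    w ∈ Subgroup.closure (cs.simple '' J) ↔ ∃ ω : List B, (∀ i ∈ ω, i ∈ J) ∧ w = ππ ω := by
  constructor
  · intro hw
    induction hw using Subgroup.closure_induction with
    | mem x hx =>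
        obtain ⟨jj, hj, rfl⟩ := hx
        exact ⟨[jj], by simpa using hj, by simp⟩
    | one => exact ⟨[], by simp, by simp⟩
    | mul x y hx hy ihx ihy =>
        obtain ⟨ω1, h1, rfl⟩ := ihx
        obtain ⟨ω2, h2, rfl⟩ := ihy
        refine ⟨ω1 ++ ω2, ?_, (cs.wordProd_append ω1 ω2).symm⟩
        intro i hi
        rcases List.mem_append.mp hi with h | h
        exacts [h1 i h, h2 i h]
    | inv x hx ihx =>
        obtain ⟨ω1, h1, rfl⟩ := ihx
        exact ⟨ω1.reverse, fun i hi => h1 i (List.mem_reverse.mp hi),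
          (cs.wordProd_reverse ω1).symm⟩
  · rintro ⟨ω, hω, rfl⟩
    induction ω with
    | nil => simp only [CoxeterSystem.wordProd_nil]; exact one_mem _
    | cons i ω ih =>
        rw [CoxeterSystem.wordProd_cons]
        refine mul_mem (Subgroup.subset_closure ⟨i, hω i (by simp), rfl⟩) ?_
        exact ih (fun x hx => hω x (by simp [hx]))

lemma simple_mem_parabolic {J : Set B} {j : B} (hj : j ∈ J) :
    σσ j ∈ Subgroup.closure (cs.simple '' J) :=
  Subgroup.subset_closure ⟨j, hj, rfl⟩

lemma exists_reduced_J_word (J : Set B) (w : W)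
    (hw : w ∈ Subgroup.closure (cs.simple '' J)) :
    ∃ ω : List B, (∀ i ∈ ω, i ∈ J) ∧ cs.IsReduced ω ∧ w = ππ ω := by
  obtain ⟨ω, hω, rfl⟩ := (mem_parabolic_iff cs J _).mp hw
  clear hw
  suffices H : ∀ (n : ℕ) (ω : List B), ω.length = n → (∀ i ∈ ω, i ∈ J) →
      ∃ ω' : List B, (∀ i ∈ ω', i ∈ J) ∧ cs.IsReduced ω' ∧ ππ ω = ππ ω' by
    obtain ⟨ω', h1, h2, h3⟩ := H ω.length ω rfl hω
    exact ⟨ω', h1, h2, h3⟩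
  intro n
  induction n using Nat.strong_induction_on with
  | _ n ih =>
    intro ω hlen hmem
    by_cases hr : cs.IsReduced ω
    · exact ⟨ω, hmem, hr, rfl⟩
    · obtain ⟨ω', hπ, hl, hsub⟩ := deletion cs ω hr
      obtain ⟨ω'', h1, h2, h3⟩ := ih ω'.length (by omega) ω' rfl
        (fun i hi => hmem i (hsub i hi))
      exact ⟨ω'', h1, h2, by rw [← hπ, h3]⟩

lemma descent_of_mem_parabolic (J : Set B) (w : W)
    (hw : w ∈ Subgroup.closure (cs.simple '' J)) (hne : w ≠ 1) :
    ∃ j ∈ J, ℓℓ (w * σσ j) < ℓℓ w := by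
  obtain ⟨ω, hmem, hred, rfl⟩ := exists_reduced_J_word cs J w hw
  have hωne : ω ≠ [] := by rintro rfl; simp at hne
  refine ⟨ω.getLast hωne, hmem _ (List.getLast_mem hωne), ?_⟩
  have hsplit : ππ (ω.dropLast ++ [ω.getLast hωne]) = ππ ω := by
    rw [List.dropLast_append_getLast hωne]
  have hπ : ππ ω * σσ (ω.getLast hωne) = ππ ω.dropLast := by
    rw [← hsplit, CoxeterSystem.wordProd_append, CoxeterSystem.wordProd_singleton, mul_assoc]
    simp
  rw [hπ]
  calc ℓℓ (ππ ω.dropLast) ≤ ω.dropLast.length := cs.length_wordProd_le _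
    _ < ω.length := by
        rw [List.length_dropLast]
        have := List.length_pos_iff.mpr hωne
        omega
    _ = ℓℓ (ππ ω) := hred.symm

lemma length_min_add (J : Set B) (u : W)
    (hmin : ∀ c ∈ Subgroup.closure (cs.simple '' J), ℓℓ u ≤ ℓℓ (u * c)) :
    ∀ x ∈ Subgroup.closure (cs.simple '' J), ℓℓ (u * x) = ℓℓ u + ℓℓ x := by
  suffices H : ∀ (n : ℕ) (x : W), x ∈ Subgroup.closure (cs.simple '' J) → ℓℓ x = n →
      ℓℓ (u * x) = ℓℓ u + ℓℓ x by
    intro x hx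
    exact H (ℓℓ x) x hx rfl
  intro n
  induction n using Nat.strong_induction_on with
  | _ n ih =>
    intro x hx hlx
    by_cases hx1 : x = 1
    · subst hx1; simp
    · obtain ⟨j, hjJ, hdesc⟩ := descent_of_mem_parabolic cs J x hx hx1
      set x' := x * σσ j with hx'def
      have hx'mem : x' ∈ Subgroup.closure (cs.simple '' J) :=
        mul_mem hx (simple_mem_parabolic cs hjJ)
      have hlx' : ℓℓ x' + 1 = ℓℓ x := by
        rcases cs.length_mul_simple x j with h | h
        · rw [← hx'def] at h; omega
        · rw [← hx'def] at h; omega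
      have hIH : ℓℓ (u * x') = ℓℓ u + ℓℓ x' := ih (ℓℓ x') (by omega) x' hx'mem rfl
      have hux : u * x = (u * x') * σσ j := by
        rw [hx'def, mul_assoc, mul_assoc, cs.simple_mul_simple_self, mul_one]
      rcases cs.length_mul_simple (u * x') j with h | h
      · rw [hux, h, hIH]; omega
      · exfalso
        obtain ⟨μ, hμred, hμ⟩ := cs.exists_reduced_word' u
        obtain ⟨ν, hνJ, hνred, hν⟩ := exists_reduced_J_word cs J x' hx'mem
        have hμlen : ℓℓ u = μ.length := by rw [hμ]; exact hμred
        have hνlen : ℓℓ x' = ν.length := by rw [hν]; exact hνred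
        have hcat : ππ (μ ++ ν) = u * x' := by
          rw [CoxeterSystem.wordProd_append, ← hμ, ← hν]
        rw [← hux] at h
        have hlt2 : ℓℓ (ππ (μ ++ ν) * σσ j) < ℓℓ (ππ (μ ++ ν)) := by
          rw [hcat, ← hux]
          omega
        obtain ⟨q, hqlt, hq⟩ := strong_exchange cs (μ ++ ν) (σσ j)
          (cs.isReflection_simple j) hlt2
        rw [List.length_append] at hqlt
        rw [hcat] at hq
        rcases lt_or_ge q μ.length with hcase | hcase
        · rw [List.eraseIdx_append_of_lt_length hcase, CoxeterSystem.wordProd_append,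
            ← hν] at hq
          -- hq : π (μ.eraseIdx q) * x' = u * x' * σσ j
          have hval : ππ (μ.eraseIdx q) = u * (x' * σσ j * x'⁻¹) := by
            have := congrArg (fun z => z * x'⁻¹) hq
            simpa [mul_assoc] using this
          have hcmem : x' * σσ j * x'⁻¹ ∈ Subgroup.closure (cs.simple '' J) :=
            mul_mem (mul_mem hx'mem (simple_mem_parabolic cs hjJ)) (inv_mem hx'mem)
          have h1 : ℓℓ u ≤ ℓℓ (ππ (μ.eraseIdx q)) := hval ▸ hmin _ hcmem
          have h2 : ℓℓ (ππ (μ.eraseIdx q)) ≤ (μ.eraseIdx q).length :=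
            cs.length_wordProd_le _
          rw [List.length_eraseIdx_of_lt hcase] at h2
          omega
        · rw [List.eraseIdx_append_of_length_le hcase, CoxeterSystem.wordProd_append,
            ← hμ] at hq
          -- hq : u * π (ν.eraseIdx (q - μ.length)) = u * x' * σσ j = u * x
          have hxval : x = ππ (ν.eraseIdx (q - μ.length)) := by
            have h5 : u * ππ (ν.eraseIdx (q - μ.length)) = u * x := by
              rw [hq, ← hux]
            exact (mul_left_cancel h5).symm
          have h2 : ℓℓ x ≤ (ν.eraseIdx (q - μ.length)).length := by
            rw [hxval]; exact cs.length_wordProd_le _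
          rw [List.length_eraseIdx_of_lt (by omega)] at h2
          omega

lemma exists_min_decomp (J : Set B) (w : W) :
    ∃ u c : W, c ∈ Subgroup.closure (cs.simple '' J) ∧ w = u * c ∧
      (∀ c' ∈ Subgroup.closure (cs.simple '' J), ℓℓ u ≤ ℓℓ (u * c')) := by
  have hS : ∃ n : ℕ, ∃ c ∈ Subgroup.closure (cs.simple '' J), ℓℓ (w * c) = n :=
    ⟨ℓℓ w, 1, one_mem _, by simp⟩
  obtain ⟨c0, hc0, hlc0⟩ := Nat.find_spec hS
  refine ⟨w * c0, c0⁻¹, inv_mem hc0, by simp [mul_assoc], ?_⟩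
  intro c' hc'
  have hmem : c0 * c' ∈ Subgroup.closure (cs.simple '' J) := mul_mem hc0 hc'
  have h1 : Nat.find hS ≤ ℓℓ (w * (c0 * c')) := Nat.find_min' hS ⟨c0 * c', hmem, rfl⟩
  rw [hlc0, mul_assoc]
  exact h1

theorem decomp_exists_unique (J : Set B) (w : W) :
    ∃! u : W, (∀ j ∈ J, ℓℓ u < ℓℓ (u * σσ j)) ∧
      u⁻¹ * w ∈ Subgroup.closure (cs.simple '' J) := by
  obtain ⟨u0, c0, hc0, hw, hmin⟩ := exists_min_decomp cs J w
  have hadd := length_min_add cs J u0 hmin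
  refine ⟨u0, ⟨?_, ?_⟩, ?_⟩
  · intro j hj
    have := hadd (σσ j) (simple_mem_parabolic cs hj)
    rw [this, cs.length_simple]
    omega
  · rw [hw]
    simpa using hc0
  · rintro v ⟨hv, hvmem⟩
    set x := u0⁻¹ * v with hxdef
    have hx : x ∈ Subgroup.closure (cs.simple '' J) := by
      have h2 : v⁻¹ * u0 = (v⁻¹ * w) * c0⁻¹ := by rw [hw]; group
      have h3 : v⁻¹ * u0 ∈ Subgroup.closure (cs.simple '' J) := by
        rw [h2]; exact mul_mem hvmem (inv_mem hc0)
      have h4 : x = (v⁻¹ * u0)⁻¹ := by rw [hxdef]; group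
      rw [h4]; exact inv_mem h3
    by_cases hx1 : x = 1
    · rw [hxdef] at hx1
      have : v = u0 := by
        have := congrArg (fun z => u0 * z) hx1
        simpa using this
      exact this
    · exfalso
      obtain ⟨j, hjJ, hdesc⟩ := descent_of_mem_parabolic cs J x hx hx1
      have hveq : v = u0 * x := by rw [hxdef]; simp
      have h1 : ℓℓ v = ℓℓ u0 + ℓℓ x := by rw [hveq]; exact hadd x hx
      have h2 : ℓℓ (v * σσ j) = ℓℓ u0 + ℓℓ (x * σσ j) := by
        rw [hveq, mul_assoc]
        exact hadd _ (mul_mem hx (simple_mem_parabolic cs hjJ))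
      have := hv j hjJ
      omega

lemma one_mem_minRepsAux (J : Set B) : ∀ j ∈ J, ℓℓ (1 : W) < ℓℓ ((1 : W) * σσ j) := by
  intro j _
  rw [one_mul, cs.length_simple, cs.length_one]
  omega

/-- Counting: if `A` is closed under right multiplication by the parabolic subgroup, then
`|A| = |A ∩ X_J| ⬝ |W_J|`. -/
lemma card_decomp (J : Set B)
    (mr : Set W) (hmr : mr = {w : W | ∀ j ∈ J, ℓℓ w < ℓℓ (w * σσ j)})
    (A : Set W)
    (hA : ∀ a ∈ A, ∀ c ∈ Subgroup.closure (cs.simple '' J), a * c ∈ A) :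
    Nat.card A = Nat.card ↥(A ∩ mr) * Nat.card (Subgroup.closure (cs.simple '' J)) := by
  classical
  set P := Subgroup.closure (cs.simple '' J) with hP
  have hmem : ∀ (u : W), u ∈ mr ↔ ∀ j ∈ J, ℓℓ u < ℓℓ (u * σσ j) := by
    intro u; rw [hmr]; rfl
  let f : ↥(A ∩ mr) × ↥P → ↥A :=
    fun uc => ⟨uc.1.1 * uc.2.1, hA _ uc.1.2.1 _ uc.2.2⟩
  have hinj : Function.Injective f := by
    rintro ⟨⟨u, huA, humr⟩, ⟨c, hc⟩⟩ ⟨⟨u', hu'A, hu'mr⟩, ⟨c', hc'⟩⟩ h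
    have heq : u * c = u' * c' := congrArg Subtype.val h
    have hEU := decomp_exists_unique cs J (u * c)
    have e1 : (∀ j ∈ J, ℓℓ u < ℓℓ (u * σσ j)) ∧ u⁻¹ * (u * c) ∈ P :=
      ⟨(hmem u).mp humr, by simpa using hc⟩
    have e2 : (∀ j ∈ J, ℓℓ u' < ℓℓ (u' * σσ j)) ∧ u'⁻¹ * (u * c) ∈ P := by
      refine ⟨(hmem u').mp hu'mr, ?_⟩
      rw [heq]
      simpa using hc'
    have huu : u = u' := hEU.unique e1 e2
    subst huu
    have hcc : c = c' := by
      have := mul_left_cancel heq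
      exact this
    subst hcc
    rfl
  have hsurj : Function.Surjective f := by
    rintro ⟨a, ha⟩
    obtain ⟨u, ⟨humr, huP⟩, -⟩ := decomp_exists_unique cs J a
    have huA : u ∈ A := by
      have h1 : u = a * (u⁻¹ * a)⁻¹ := by group
      rw [h1]
      exact hA a ha _ (inv_mem huP)
    refine ⟨⟨⟨u, huA, (hmem u).mpr humr⟩, ⟨u⁻¹ * a, huP⟩⟩, ?_⟩
    apply Subtype.ext
    show u * (u⁻¹ * a) = a
    group
  have hcardeq : Nat.card ↥A = Nat.card (↥(A ∩ mr) × ↥P) :=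
    (Nat.card_congr (Equiv.ofBijective f ⟨hinj, hsurj⟩)).symm
  rw [hcardeq, Nat.card_prod]


lemma decompEU (J : Set B) (w : W) :
    ∃! u : W, u ∈ minReps cs J ∧ u⁻¹ * w ∈ parabolic cs J :=
  decomp_exists_unique cs J w

lemma one_mem_minReps (J : Set B) : (1 : W) ∈ minReps cs J :=
  one_mem_minRepsAux cs J

lemma minRep_parab_eq_one {I : Set B} {p : W} (hpX : p ∈ minReps cs I)
    (hpP : p ∈ parabolic cs I) : p = 1 :=
  (decompEU cs I p).unique ⟨hpX, by simpa using one_mem (parabolic cs I)⟩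
    ⟨one_mem_minReps cs I, by simpa using hpP⟩

lemma Wset_eq (I J : Set B) (b : W)
    (hconj : ∀ c ∈ parabolic cs J, b * c * b⁻¹ ∈ parabolic cs I) :
    Wset cs I J b = {x : W | x * b⁻¹ ∈ parabolic cs I} ∩ minReps cs J := by
  ext w
  constructor
  · rintro ⟨u, c, p, q, huX, hcP, hwuc, hpX, hqP, hwpq, hubq⟩
    have hq' : u * b⁻¹ ∈ parabolic cs I := by rw [hubq]; exact hqP
    have hwb : w * b⁻¹ ∈ parabolic cs I := by
      have h1 : w * b⁻¹ = (u * b⁻¹) * (b * c * b⁻¹) := by rw [hwuc]; group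
      rw [h1]
      exact mul_mem hq' (hconj c hcP)
    have hpP : p ∈ parabolic cs I := by
      have h1 : p = (w * b⁻¹) * q⁻¹ := by rw [hwpq]; group
      rw [h1]
      exact mul_mem hwb (inv_mem hqP)
    have hp1 : p = 1 := minRep_parab_eq_one cs hpX hpP
    have hwu : w = u := by
      have h1 : w * b⁻¹ = u * b⁻¹ := by rw [hwpq, hp1, one_mul, hubq]
      exact mul_right_cancel h1
    exact ⟨hwb, by rw [hwu]; exact huX⟩
  · rintro ⟨hwb, hwX⟩
    exact ⟨w, 1, 1, w * b⁻¹, hwX, one_mem _, (mul_one w).symm, one_mem_minReps cs I, hwb,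
      (one_mul _).symm, rfl⟩

lemma Wset_inv_eq (I J : Set B) (b : W) (hb1 : b⁻¹ ∈ minReps cs I)
    (hconj : ∀ c ∈ parabolic cs J, b * c * b⁻¹ ∈ parabolic cs I) :
    Wset cs J I b⁻¹
      = (fun x => x * b⁻¹) '' ({x : W | b * x * b⁻¹ ∈ parabolic cs I} ∩ minReps cs J) := by
  ext w
  constructor
  · rintro ⟨u, c, p, q, huX, hcP, hwuc, hpX, hqP, hwpq, hubq⟩
    rw [inv_inv] at hwpq hubq
    have hu : u = b⁻¹ := by
      refine (decompEU cs I b⁻¹).unique ⟨huX, ?_⟩ ⟨hb1, by simpa using one_mem (parabolic cs I)⟩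
      have h2 : u⁻¹ * b⁻¹ = (b * (u * b) * b⁻¹)⁻¹ := by group
      rw [h2, hubq]
      exact inv_mem (hconj q hqP)
    have hq1 : q = 1 := by
      rw [← hubq, hu]
      group
    refine ⟨w * b, ⟨?_, ?_⟩, by group⟩
    · show b * (w * b) * b⁻¹ ∈ parabolic cs I
      have hcalc : b * (w * b) * b⁻¹ = c := by rw [hwuc, hu]; group
      rw [hcalc]
      exact hcP
    · have h3 : w * b = p := by rw [hwpq, hq1, mul_one]
      rw [h3]
      exact hpX
  · rintro ⟨x, ⟨hxC, hxX⟩, rfl⟩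
    refine ⟨b⁻¹, b * x * b⁻¹, x, 1, hb1, hxC, by group, hxX, one_mem _, ?_, ?_⟩
    · rw [inv_inv]
      group
    · rw [inv_inv]
      group

lemma card_setA1 (I : Set B) (b : W) :
    Nat.card ↥{x : W | x * b⁻¹ ∈ parabolic cs I} = Nat.card (parabolic cs I) := by
  refine Nat.card_congr ⟨fun a => ⟨a.1 * b⁻¹, a.2⟩, fun c => ⟨c.1 * b, ?_⟩, ?_, ?_⟩
  · show (c.1 * b) * b⁻¹ ∈ parabolic cs I
    have h1 : (c.1 * b) * b⁻¹ = c.1 := by group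
    rw [h1]
    exact c.2
  · rintro ⟨a, ha⟩
    apply Subtype.ext
    show (a * b⁻¹) * b = a
    group
  · rintro ⟨c, hc⟩
    apply Subtype.ext
    show (c * b) * b⁻¹ = c
    group

lemma card_setA2 (I : Set B) (b : W) :
    Nat.card ↥{x : W | b * x * b⁻¹ ∈ parabolic cs I} = Nat.card (parabolic cs I) := by
  refine Nat.card_congr ⟨fun a => ⟨b * a.1 * b⁻¹, a.2⟩, fun c => ⟨b⁻¹ * c.1 * b, ?_⟩, ?_, ?_⟩
  · show b * (b⁻¹ * c.1 * b) * b⁻¹ ∈ parabolic cs I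
    have h1 : b * (b⁻¹ * c.1 * b) * b⁻¹ = c.1 := by group
    rw [h1]
    exact c.2
  · rintro ⟨a, ha⟩
    apply Subtype.ext
    show b⁻¹ * (b * a * b⁻¹) * b = a
    group
  · rintro ⟨c, hc⟩
    apply Subtype.ext
    show b * (b⁻¹ * c * b) * b⁻¹ = c
    group


end CoxAux

/-- If `b ∈ X_{IJ}` and `bJb⁻¹ ⊆ I` then
`|W(I,J,b)| = |W(J,I,b⁻¹)| = |W_I| / |W_J|`. -/
theorem statement17 [Fintype W] (cs : CoxeterSystem M W) (I J : Set B) (b : W)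
    (hb : b ∈ doubleReps cs I J)
    (hconj : ∀ j ∈ J, ∃ i ∈ I, b * cs.simple j * b⁻¹ = cs.simple i) :
    Nat.card (Wset cs I J b) = Nat.card (Wset cs J I b⁻¹) ∧
    (Nat.card (Wset cs I J b) : ℚ)
      = (Nat.card (parabolic cs I) : ℚ) / (Nat.card (parabolic cs J) : ℚ) := by
  classical
  have hb1 : b⁻¹ ∈ minReps cs I := hb.1
  have hb2 : b ∈ minReps cs J := hb.2
  have hconjP : ∀ c ∈ parabolic cs J, b * c * b⁻¹ ∈ parabolic cs I := by
    intro c hc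
    induction hc using Subgroup.closure_induction with
    | mem x hx =>
        obtain ⟨jj, hj, rfl⟩ := hx
        obtain ⟨ii, hi, he⟩ := hconj jj hj
        rw [he]
        exact Subgroup.subset_closure ⟨ii, hi, rfl⟩
    | one => simpa using one_mem (parabolic cs I)
    | mul x y hx hy ihx ihy =>
        have h1 : b * (x * y) * b⁻¹ = (b * x * b⁻¹) * (b * y * b⁻¹) := by group
        rw [h1]
        exact mul_mem ihx ihy
    | inv x hx ihx =>
        have h1 : b * x⁻¹ * b⁻¹ = (b * x * b⁻¹)⁻¹ := by group
        rw [h1]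
        exact inv_mem ihx
  have hW1 := CoxAux.Wset_eq cs I J b hconjP
  have hW2 := CoxAux.Wset_inv_eq cs I J b hb1 hconjP
  set A1 := {x : W | x * b⁻¹ ∈ parabolic cs I} with hA1
  set A2 := {x : W | b * x * b⁻¹ ∈ parabolic cs I} with hA2
  have hA1closed : ∀ a ∈ A1, ∀ c ∈ Subgroup.closure (cs.simple '' J), a * c ∈ A1 := by
    intro a ha c hc
    show (a * c) * b⁻¹ ∈ parabolic cs I
    have h1 : (a * c) * b⁻¹ = (a * b⁻¹) * (b * c * b⁻¹) := by group
    rw [h1]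
    exact mul_mem ha (hconjP c hc)
  have hA2closed : ∀ a ∈ A2, ∀ c ∈ Subgroup.closure (cs.simple '' J), a * c ∈ A2 := by
    intro a ha c hc
    show b * (a * c) * b⁻¹ ∈ parabolic cs I
    have h1 : b * (a * c) * b⁻¹ = (b * a * b⁻¹) * (b * c * b⁻¹) := by group
    rw [h1]
    exact mul_mem ha (hconjP c hc)
  have hc1 : Nat.card ↥A1 = Nat.card ↥(A1 ∩ minReps cs J) * Nat.card (parabolic cs J) :=
    CoxAux.card_decomp cs J (minReps cs J) rfl A1 hA1closed
  have hc2 : Nat.card ↥A2 = Nat.card ↥(A2 ∩ minReps cs J) * Nat.card (parabolic cs J) :=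
    CoxAux.card_decomp cs J (minReps cs J) rfl A2 hA2closed
  have hA1card : Nat.card ↥A1 = Nat.card (parabolic cs I) := CoxAux.card_setA1 cs I b
  have hA2card : Nat.card ↥A2 = Nat.card (parabolic cs I) := CoxAux.card_setA2 cs I b
  have himg : Nat.card ↥((fun x => x * b⁻¹) '' (A2 ∩ minReps cs J))
      = Nat.card ↥(A2 ∩ minReps cs J) := by
    rw [Nat.card_coe_set_eq, Nat.card_coe_set_eq]
    exact Set.ncard_image_of_injective _ (mul_left_injective b⁻¹)
  have hJpos : 0 < Nat.card (parabolic cs J) := Nat.card_pos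
  have hmain : Nat.card ↥(A1 ∩ minReps cs J) * Nat.card (parabolic cs J)
      = Nat.card (parabolic cs I) := by rw [← hc1, hA1card]
  have hmain2 : Nat.card ↥(A2 ∩ minReps cs J) * Nat.card (parabolic cs J)
      = Nat.card (parabolic cs I) := by rw [← hc2, hA2card]
  constructor
  · rw [hW1, hW2, himg]
    exact Nat.eq_of_mul_eq_mul_right hJpos (hmain.trans hmain2.symm)
  · rw [hW1]
    have hcast : ((Nat.card ↥(A1 ∩ minReps cs J) : ℚ)) * (Nat.card (parabolic cs J) : ℚ)
        = (Nat.card (parabolic cs I) : ℚ) := by exact_mod_cast hmain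
    rw [eq_div_iff (by exact_mod_cast hJpos.ne')]
    exact hcast
end

section
/- Let (W,S) be a finite Coxeter system with |S| = 2 (so W is a finite dihedral group). Then for all I,J ⊆ S and all b ∈ X_{IJ}, |W(I,J,b)| = |W(J,I,b^{-1})|. -/
open scoped Classical

variable {B : Type*} {W : Type*} [Group W] {M : CoxeterMatrix B}

section Aux19

open CoxeterSystem List

variable (cs : CoxeterSystem M W)

private lemma aux19_simple_ne_one (i : B) : cs.simple i ≠ 1 := by
  intro h
  have h1 := cs.length_simple i
  rw [h, cs.length_one] at h1
  exact absurd h1 (by norm_num)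

private lemma aux19_mem_parabolic_singleton (x : B) (g : W) :
    g ∈ parabolic cs {x} ↔ g = 1 ∨ g = cs.simple x := by
  unfold parabolic
  rw [Set.image_singleton, Subgroup.mem_closure_singleton]
  constructor
  · rintro ⟨n, rfl⟩
    rcases Int.even_or_odd n with ⟨k, hk⟩ | ⟨k, hk⟩
    · left
      subst hk
      rw [← two_mul, zpow_mul, show (2:ℤ) = ((2:ℕ):ℤ) by norm_num, zpow_natCast,
        cs.simple_sq, one_zpow]
    · right
      subst hk
      rw [zpow_add, zpow_mul, zpow_one, show (2:ℤ) = ((2:ℕ):ℤ) by norm_num, zpow_natCast,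
        cs.simple_sq, one_zpow, one_mul]
  · rintro (rfl | rfl)
    · exact ⟨0, by simp⟩
    · exact ⟨1, by simp⟩

private lemma aux19_parabolic_empty : parabolic cs (∅ : Set B) = ⊥ := by
  unfold parabolic
  rw [Set.image_empty, Subgroup.closure_empty]

private lemma aux19_parabolic_univ : parabolic cs (Set.univ : Set B) = ⊤ := by
  unfold parabolic
  rw [Set.image_univ, cs.subgroup_closure_range_simple]

private lemma aux19_one_mem_minReps (I : Set B) : (1 : W) ∈ minReps cs I := by
  intro i _
  simp [cs.length_one, cs.length_simple]

private lemma aux19_minReps_empty : minReps cs (∅ : Set B) = Set.univ := by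
  ext w; simp [minReps]

private lemma aux19_minReps_univ : minReps cs (Set.univ : Set B) = {1} := by
  ext w
  constructor
  · intro h
    by_contra hw
    obtain ⟨i, hi⟩ := cs.exists_rightDescent_of_ne_one (by simpa using hw)
    have := h i (Set.mem_univ i)
    rw [CoxeterSystem.IsRightDescent] at hi
    omega
  · rintro rfl
    exact aux19_one_mem_minReps cs _

private lemma aux19_mem_minReps_singleton (x : B) (w : W) :
    w ∈ minReps cs {x} ↔ cs.length w < cs.length (w * cs.simple x) := by
  simp [minReps]

private lemma aux19_mem_wset (I J : Set B) (b w : W) :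
    w ∈ Wset cs I J b ↔ ∃ u c : W,
      u ∈ minReps cs J ∧ c ∈ parabolic cs J ∧ w = u * c ∧
      u * b⁻¹ ∈ parabolic cs I ∧ u * c * u⁻¹ ∈ minReps cs I := by
  constructor
  · rintro ⟨u, c, p, q, h1, h2, h3, h4, h5, h6, h7⟩
    refine ⟨u, c, h1, h2, h3, ?_, ?_⟩
    · rw [h7]; exact h5
    · have hp : p = u * c * u⁻¹ := by
        have h6' : u * c * b⁻¹ = p * (u * b⁻¹) := by rw [← h3, h7]; exact h6
        have h8 : p = (u * c * b⁻¹) * (u * b⁻¹)⁻¹ := by rw [h6']; group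
        rw [h8]; group
      rw [← hp]; exact h4
  · rintro ⟨u, c, hu, hc, hw, hq, hp⟩
    exact ⟨u, c, u * c * u⁻¹, u * b⁻¹, hu, hc, hw, hp, hq, by rw [hw]; group, rfl⟩

private lemma aux19_mem_doubleReps (I J : Set B) (b : W) :
    b ∈ doubleReps cs I J ↔ b⁻¹ ∈ minReps cs I ∧ b ∈ minReps cs J :=
  Iff.rfl


private lemma aux19_alt_map {B' : Type*} (f : B → B') (i j : B) :
    ∀ m : ℕ, (CoxeterSystem.alternatingWord i j m).map f
      = CoxeterSystem.alternatingWord (f i) (f j) m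
  | 0 => rfl
  | m + 1 => by
    rw [CoxeterSystem.alternatingWord_succ, CoxeterSystem.alternatingWord_succ,
      List.concat_eq_append, List.concat_eq_append, List.map_append,
      aux19_alt_map f j i m]
    rfl

private lemma aux19_alt_reverse (i j : B) :
    ∀ m : ℕ, (CoxeterSystem.alternatingWord i j m).reverse =
      if Even m then CoxeterSystem.alternatingWord j i m
      else CoxeterSystem.alternatingWord i j m
  | 0 => by simp [CoxeterSystem.alternatingWord]
  | m + 1 => by
    have h1 : (CoxeterSystem.alternatingWord i j (m+1)).reverse
        = j :: (CoxeterSystem.alternatingWord j i m).reverse := by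
      rw [CoxeterSystem.alternatingWord_succ]; simp
    rw [h1, aux19_alt_reverse j i m]
    rcases Nat.even_or_odd m with he | ho
    · have h2 : ¬ Even (m+1) := by simp [Nat.even_add_one, he]
      rw [if_pos he, if_neg h2, CoxeterSystem.alternatingWord_succ' i j m, if_pos he]
    · have h3 : ¬ Even m := Nat.not_even_iff_odd.mpr ho
      have h4 : Even (m+1) := Nat.even_add_one.mpr h3
      rw [if_neg h3, if_pos h4, CoxeterSystem.alternatingWord_succ' j i m, if_neg h3]

private lemma aux19_alt_step (i j : B) (hcov : ∀ a : B, a = i ∨ a = j) (n : ℕ) (w : W) (d : B)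
    (hlen : cs.length w = n + 1)
    (h : w * cs.simple d = cs.wordProd (CoxeterSystem.alternatingWord i j n)) :
    w = cs.wordProd (CoxeterSystem.alternatingWord i j (n + 1)) ∨
      w = cs.wordProd (CoxeterSystem.alternatingWord j i (n + 1)) := by
  have hw : w = cs.wordProd (CoxeterSystem.alternatingWord i j n) * cs.simple d := by
    rw [← h, cs.simple_mul_simple_cancel_right]
  rcases Nat.eq_zero_or_pos n with rfl | hn
  · simp only [CoxeterSystem.alternatingWord, List.replicate, cs.wordProd_nil, one_mul] at hw
    rcases hcov d with rfl | rfl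
    · right
      rw [hw]
      rw [show CoxeterSystem.alternatingWord j d 1 = [d] from rfl, cs.wordProd_singleton]
    · left
      rw [hw]
      rw [show CoxeterSystem.alternatingWord i d 1 = [d] from rfl, cs.wordProd_singleton]
  · obtain ⟨k, rfl⟩ := Nat.exists_eq_add_of_le hn
    rcases hcov d with rfl | rfl
    · -- d = i : extend to alternating word of type (j i)
      right
      rw [hw, ← cs.wordProd_concat, ← CoxeterSystem.alternatingWord_succ]
    · -- d = j : the alternating word ends with j; contradiction with length
      exfalso
      have hsplit : CoxeterSystem.alternatingWord i d (1 + k) = (CoxeterSystem.alternatingWord d i k).concat d := by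
        rw [show 1 + k = k + 1 by omega, CoxeterSystem.alternatingWord_succ]
      rw [hsplit, cs.wordProd_concat, cs.simple_mul_simple_cancel_right] at hw
      have hle := cs.length_wordProd_le (CoxeterSystem.alternatingWord d i k)
      rw [← hw, hlen, CoxeterSystem.length_alternatingWord] at hle
      omega

private lemma aux19_eq_alternatingWord (i j : B) (hcov : ∀ a : B, a = i ∨ a = j) (w : W) :
    w = cs.wordProd (CoxeterSystem.alternatingWord i j (cs.length w)) ∨
      w = cs.wordProd (CoxeterSystem.alternatingWord j i (cs.length w)) := by
  generalize hn : cs.length w = n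
  induction n generalizing w with
  | zero =>
    left
    have hw : w = 1 := cs.length_eq_zero_iff.mp hn
    simp [hw, CoxeterSystem.alternatingWord]
  | succ n ih =>
    have hw1 : w ≠ 1 := by
      intro h
      rw [h, cs.length_one] at hn
      omega
    obtain ⟨d, hd⟩ := cs.exists_rightDescent_of_ne_one hw1
    have hlen' : cs.length (w * cs.simple d) = n := by
      have h2 := (cs.isRightDescent_iff).mp hd
      omega
    rcases ih (w * cs.simple d) hlen' with h | h
    · exact aux19_alt_step cs i j hcov n w d hn h
    · exact (aux19_alt_step cs j i (fun a => (hcov a).symm) n w d hn h).symm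

private lemma aux19_cover [Fintype B] (hS : Fintype.card B = 2) {x z : B} (hxz : x ≠ z) (a : B) :
    a = x ∨ a = z := by
  by_contra hcon
  push_neg at hcon
  have h3 : ({a, x, z} : Finset B).card = 3 := by
    rw [Finset.card_insert_of_notMem (by simp [hcon.1, hcon.2]),
      Finset.card_insert_of_notMem (by simp [hxz]), Finset.card_singleton]
  have h4 := Finset.card_le_univ ({a, x, z} : Finset B)
  rw [h3] at h4
  rw [hS] at h4
  omega

private lemma aux19_exists_lengthPreserving (σ : B ≃ B)
    (hσM : ∀ a a' : B, M (σ a) (σ a') = M a a') (hσ2 : ∀ a : B, σ (σ a) = a) :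
    ∃ φ : W →* W, (∀ a : B, φ (cs.simple a) = cs.simple (σ a)) ∧
      (∀ ω : List B, φ (cs.wordProd ω) = cs.wordProd (ω.map σ)) ∧
      (∀ w : W, cs.length (φ w) = cs.length w) := by
  have hlift : CoxeterMatrix.IsLiftable M (fun a => cs.simple (σ a)) := by
    intro a a'
    have h := cs.simple_mul_simple_pow (σ a) (σ a')
    rwa [hσM] at h
  refine ⟨cs.lift ⟨_, hlift⟩, fun a => cs.lift_apply_simple hlift a, ?_⟩
  set φ := cs.lift ⟨_, hlift⟩ with hφ
  have hword : ∀ ω : List B, φ (cs.wordProd ω) = cs.wordProd (ω.map σ) := by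
    intro ω
    induction ω with
    | nil => simp
    | cons a ω ih =>
      rw [cs.wordProd_cons, map_mul, ih, List.map_cons, cs.wordProd_cons, hφ,
        cs.lift_apply_simple]
  refine ⟨hword, ?_⟩
  have hle : ∀ w : W, cs.length (φ w) ≤ cs.length w := by
    intro w
    obtain ⟨ω, hω1, hω2⟩ := cs.exists_reduced_word w
    have h1 : φ w = cs.wordProd (ω.map σ) := by rw [hω2, hword]
    rw [h1]
    calc cs.length (cs.wordProd (ω.map σ)) ≤ (ω.map σ).length := cs.length_wordProd_le _
    _ = ω.length := List.length_map _
    _ = cs.length w := by rw [hω2]; exact hω1.symm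
  have hinv : ∀ w : W, φ (φ w) = w := by
    intro w
    obtain ⟨ω, _, hω2⟩ := cs.exists_reduced_word w
    rw [hω2, hword, hword, List.map_map]
    have : (⇑σ ∘ ⇑σ) = id := funext hσ2
    rw [this, List.map_id]
  intro w
  refine le_antisymm (hle w) ?_
  conv_lhs => rw [← hinv w]
  exact hle (φ w)

private lemma aux19_key_phi [Fintype B] (hS : Fintype.card B = 2) (x y : B) (b : W)
    (hb1 : cs.length b < cs.length (cs.simple x * b))
    (hb2 : cs.length b < cs.length (b * cs.simple y)) :
    ∃ φ : W →* W, (∀ w : W, cs.length (φ w) = cs.length w) ∧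
      φ (cs.simple x) = cs.simple y ∧ φ (cs.simple y) = cs.simple x ∧ φ b = b⁻¹ := by
  by_cases hxy : x = y
  · -- identity homomorphism; need b = b⁻¹
    subst hxy
    have hnt : Nontrivial B := Fintype.one_lt_card_iff_nontrivial.mp (by omega)
    obtain ⟨z, hz⟩ := exists_ne x
    have hcov : ∀ a : B, a = x ∨ a = z := aux19_cover hS (Ne.symm hz)
    have hbb : b = b⁻¹ := by
      rcases Nat.eq_zero_or_pos (cs.length b) with h0 | hpos
      · rw [cs.length_eq_zero_iff.mp h0]; simp
      · obtain ⟨k, hk⟩ : ∃ k, cs.length b = k + 1 := ⟨cs.length b - 1, by omega⟩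
        rcases aux19_eq_alternatingWord cs x z hcov b with hb | hb
        · -- b = π (alt x z (k+1)); show k even, then palindrome
          rw [hk] at hb
          have hfirst : ¬ Even k → False := by
            intro hek
            have : cs.simple x * b = cs.wordProd (CoxeterSystem.alternatingWord x z k) := by
              rw [hb, CoxeterSystem.alternatingWord_succ', if_neg hek, cs.wordProd_cons,
                cs.simple_mul_simple_cancel_left]
            have hle := cs.length_wordProd_le (CoxeterSystem.alternatingWord x z k)
            rw [← this, CoxeterSystem.length_alternatingWord] at hle
            omega
          have hek : Even k := by by_contra h; exact hfirst h
          have hok : ¬ Even (k + 1) := by simp [Nat.even_add_one, hek]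
          rw [hb, ← cs.wordProd_reverse, aux19_alt_reverse, if_neg hok]
        · -- b = π (alt z x (k+1)) : ends with x, contradicting hb2
          exfalso
          rw [hk] at hb
          have : b * cs.simple x = cs.wordProd (CoxeterSystem.alternatingWord x z k) := by
            rw [hb, CoxeterSystem.alternatingWord_succ, cs.wordProd_concat,
              cs.simple_mul_simple_cancel_right]
          have hle := cs.length_wordProd_le (CoxeterSystem.alternatingWord x z k)
          rw [← this, CoxeterSystem.length_alternatingWord] at hle
          omega
      
    exact ⟨MonoidHom.id W, fun w => rfl, rfl, rfl, hbb⟩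
  · -- swap homomorphism
    have hcov : ∀ a : B, a = x ∨ a = y := aux19_cover hS hxy
    have hσM : ∀ a a' : B, M (Equiv.swap x y a) (Equiv.swap x y a') = M a a' := by
      intro a a'
      rcases hcov a with rfl | rfl <;> rcases hcov a' with rfl | rfl <;>
        simp [Equiv.swap_apply_left, Equiv.swap_apply_right, M.symmetric]
    obtain ⟨φ, hφs, hφw, hφl⟩ := aux19_exists_lengthPreserving cs (Equiv.swap x y) hσM
      (fun a => Equiv.swap_apply_self x y a)
    refine ⟨φ, hφl, by rw [hφs, Equiv.swap_apply_left], by rw [hφs, Equiv.swap_apply_right], ?_⟩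
    rcases Nat.eq_zero_or_pos (cs.length b) with h0 | hpos
    · rw [cs.length_eq_zero_iff.mp h0]; simp
    · obtain ⟨k, hk⟩ : ∃ k, cs.length b = k + 1 := ⟨cs.length b - 1, by omega⟩
      rcases aux19_eq_alternatingWord cs x y hcov b with hb | hb
      · -- b = π (alt x y (k+1)) ends with y : contradict hb2
        exfalso
        rw [hk] at hb
        have : b * cs.simple y = cs.wordProd (CoxeterSystem.alternatingWord y x k) := by
          rw [hb, CoxeterSystem.alternatingWord_succ, cs.wordProd_concat,
            cs.simple_mul_simple_cancel_right]
        have hle := cs.length_wordProd_le (CoxeterSystem.alternatingWord y x k)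
        rw [← this, CoxeterSystem.length_alternatingWord] at hle
        omega
      · -- b = π (alt y x (k+1)): first letter must be y, so k odd, k+1 even
        rw [hk] at hb
        have hfirst : Even k → False := by
          intro hek
          have : cs.simple x * b = cs.wordProd (CoxeterSystem.alternatingWord y x k) := by
            rw [hb, CoxeterSystem.alternatingWord_succ', if_pos hek, cs.wordProd_cons,
              cs.simple_mul_simple_cancel_left]
          have hle := cs.length_wordProd_le (CoxeterSystem.alternatingWord y x k)
          rw [← this, CoxeterSystem.length_alternatingWord] at hle
          omega
        have hok : Even (k + 1) := Nat.even_add_one.mpr (fun h => hfirst h)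
        rw [hb, hφw, aux19_alt_map, Equiv.swap_apply_right, Equiv.swap_apply_left,
          ← cs.wordProd_reverse, aux19_alt_reverse, if_pos hok]

private lemma aux19_wset_right_univ (I : Set B) :
    Wset cs I (Set.univ : Set B) 1 = minReps cs I := by
  ext w
  rw [aux19_mem_wset]
  constructor
  · rintro ⟨u, c, hu, _, rfl, _, hp⟩
    rw [aux19_minReps_univ] at hu
    rw [Set.mem_singleton_iff] at hu
    subst hu
    simpa using hp
  · intro hw
    refine ⟨1, w, ?_, ?_, by simp, by simpa using Subgroup.one_mem (parabolic cs I),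
      by simpa using hw⟩
    · rw [aux19_minReps_univ]; rfl
    · rw [aux19_parabolic_univ]; trivial

private lemma aux19_wset_left_univ (I : Set B) :
    Wset cs (Set.univ : Set B) I 1 = minReps cs I := by
  ext w
  rw [aux19_mem_wset]
  constructor
  · rintro ⟨u, c, hu, _, rfl, _, hp⟩
    rw [aux19_minReps_univ, Set.mem_singleton_iff] at hp
    have hc : c = 1 := by
      have h2 : c = u⁻¹ * (u * c * u⁻¹) * u := by group
      rw [hp] at h2
      simpa using h2
    rw [hc, mul_one]
    exact hu
  · intro hw
    refine ⟨w, 1, hw, Subgroup.one_mem _, by simp, ?_, ?_⟩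
    · rw [aux19_parabolic_univ]; trivial
    · rw [aux19_minReps_univ]; simp

private lemma aux19_wset_left_empty (J : Set B) (b : W) (hb : b ∈ minReps cs J) :
    Wset cs (∅ : Set B) J b = (fun g => b * g) '' ↑(parabolic cs J) := by
  ext w
  rw [aux19_mem_wset]
  constructor
  · rintro ⟨u, c, _, hc, rfl, hq, _⟩
    rw [aux19_parabolic_empty, Subgroup.mem_bot, mul_inv_eq_one] at hq
    subst hq
    exact ⟨c, hc, rfl⟩
  · rintro ⟨c, hc, rfl⟩
    refine ⟨b, c, hb, hc, rfl, ?_, ?_⟩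
    · rw [aux19_parabolic_empty]; simp
    · rw [aux19_minReps_empty]; trivial

private lemma aux19_wset_right_empty (I : Set B) (b : W) :
    Wset cs I (∅ : Set B) b = (fun g => g * b) '' ↑(parabolic cs I) := by
  ext w
  rw [aux19_mem_wset]
  constructor
  · rintro ⟨u, c, _, hc, rfl, hq, _⟩
    rw [aux19_parabolic_empty, Subgroup.mem_bot] at hc
    subst hc
    refine ⟨u * b⁻¹, hq, by group⟩
  · rintro ⟨g, hg, rfl⟩
    refine ⟨g * b, 1, ?_, Subgroup.one_mem _, by simp, by simpa using hg, ?_⟩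
    · rw [aux19_minReps_empty]; trivial
    · rw [show g * b * 1 * (g * b)⁻¹ = (1 : W) by group]
      exact aux19_one_mem_minReps cs I

private lemma aux19_wset_singleton (x y : B) (b : W)
    (hby : cs.length b < cs.length (b * cs.simple y)) :
    Wset cs {x} {y} b =
      ({b} : Set W)
      ∪ (if cs.length (b * cs.simple y * b⁻¹) < cs.length (b * cs.simple y * b⁻¹ * cs.simple x)
          then {b * cs.simple y} else ∅)
      ∪ (if cs.length (cs.simple x * b) < cs.length (cs.simple x * b * cs.simple y)
          then {cs.simple x * b} else ∅)
      ∪ (if cs.length (cs.simple x * b) < cs.length (cs.simple x * b * cs.simple y)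
            ∧ cs.length (cs.simple x * b * cs.simple y * (cs.simple x * b)⁻¹)
              < cs.length (cs.simple x * b * cs.simple y * (cs.simple x * b)⁻¹ * cs.simple x)
          then {cs.simple x * b * cs.simple y} else ∅) := by
  classical
  ext w
  rw [aux19_mem_wset]
  constructor
  · rintro ⟨u, c, hu, hc, rfl, hq, hp⟩
    rw [aux19_mem_parabolic_singleton] at hc hq
    rw [aux19_mem_minReps_singleton] at hp hu
    rcases hq with hq | hq
    · have hub : u = b := by rwa [mul_inv_eq_one] at hq
      subst hub
      rcases hc with rfl | rfl
      · left; left; left; simp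
      · left; left; right
        rw [if_pos hp]
        exact rfl
    · have hub : u = cs.simple x * b := by
        have : u = (u * b⁻¹) * b := by group
        rw [hq] at this
        exact this
      subst hub
      rcases hc with rfl | rfl
      · left; right
        rw [if_pos hu]
        simp
      · right
        rw [if_pos ⟨hu, hp⟩]
        exact rfl
  · intro hw
    rcases hw with ((hw | hw) | hw) | hw
    · rw [Set.mem_singleton_iff] at hw
      rw [hw]
      refine ⟨b, 1, (aux19_mem_minReps_singleton cs y b).mpr hby, Subgroup.one_mem _,
        (mul_one b).symm, ?_, ?_⟩
      · rw [aux19_mem_parabolic_singleton]; left; simp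
      · rw [show b * 1 * b⁻¹ = (1 : W) by group]
        exact aux19_one_mem_minReps cs _
    · split_ifs at hw with hP1
      · rw [Set.mem_singleton_iff] at hw
        rw [hw]
        refine ⟨b, cs.simple y, (aux19_mem_minReps_singleton cs y b).mpr hby, ?_, rfl, ?_, ?_⟩
        · rw [aux19_mem_parabolic_singleton]; right; rfl
        · rw [aux19_mem_parabolic_singleton]; left; simp
        · exact (aux19_mem_minReps_singleton cs x _).mpr hP1
      · exact absurd hw (Set.notMem_empty w)
    · split_ifs at hw with hP2
      · rw [Set.mem_singleton_iff] at hw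
        rw [hw]
        refine ⟨cs.simple x * b, 1, (aux19_mem_minReps_singleton cs y _).mpr hP2,
          Subgroup.one_mem _, (mul_one _).symm, ?_, ?_⟩
        · rw [aux19_mem_parabolic_singleton]; right
          rw [show cs.simple x * b * b⁻¹ = cs.simple x by group]
        · rw [show cs.simple x * b * 1 * (cs.simple x * b)⁻¹ = (1 : W) by group]
          exact aux19_one_mem_minReps cs _
      · exact absurd hw (Set.notMem_empty w)
    · split_ifs at hw with hP23
      · rw [Set.mem_singleton_iff] at hw
        rw [hw]
        refine ⟨cs.simple x * b, cs.simple y,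
          (aux19_mem_minReps_singleton cs y _).mpr hP23.1, ?_, rfl, ?_, ?_⟩
        · rw [aux19_mem_parabolic_singleton]; right; rfl
        · rw [aux19_mem_parabolic_singleton]; right
          rw [show cs.simple x * b * b⁻¹ = cs.simple x by group]
        · exact (aux19_mem_minReps_singleton cs x _).mpr hP23.2
      · exact absurd hw (Set.notMem_empty w)

private lemma aux19_quad_card {α : Type*} (a₁ a₂ a₃ a₄ : α) (P1 P2 P3 : Prop)
    [Decidable P1] [Decidable P2] [Decidable P3] [Decidable (P2 ∧ P3)]
    (h12 : a₁ ≠ a₂) (h13 : a₁ ≠ a₃) (h14 : a₁ ≠ a₄) (h23 : a₂ ≠ a₃) (h24 : a₂ ≠ a₄)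
    (h34 : a₃ ≠ a₄) :
    Nat.card (({a₁} ∪ (if P1 then {a₂} else ∅) ∪ (if P2 then {a₃} else ∅)
      ∪ (if P2 ∧ P3 then {a₄} else ∅) : Set α)) =
      1 + (if P1 then 1 else 0) + (if P2 then 1 else 0) + (if P2 ∧ P3 then 1 else 0) := by
  classical
  rw [Nat.card_coe_set_eq]
  by_cases hp1 : P1 <;> by_cases hp2 : P2 <;> by_cases hp3 : P3
  · simp only [hp1, hp2, hp3, and_self, if_true]
    rw [Set.union_singleton, Set.union_singleton, Set.union_singleton,
      Set.ncard_insert_of_notMem (by simp [h14.symm, h24.symm, h34.symm]),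
      Set.ncard_insert_of_notMem (by simp [h13.symm, h23.symm]),
      Set.ncard_insert_of_notMem (by simp [h12.symm]),
      Set.ncard_singleton]
  · simp only [hp1, hp2, hp3, and_false, if_true, if_false, Set.union_empty]
    rw [Set.union_singleton, Set.union_singleton,
      Set.ncard_insert_of_notMem (by simp [h13.symm, h23.symm]),
      Set.ncard_insert_of_notMem (by simp [h12.symm]),
      Set.ncard_singleton]
  · simp only [hp1, hp2, hp3, false_and, if_true, if_false, Set.union_empty]
    rw [Set.union_singleton,
      Set.ncard_insert_of_notMem (by simp [h12.symm]),
      Set.ncard_singleton]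
  · simp only [hp1, hp2, hp3, false_and, if_true, if_false, Set.union_empty]
    rw [Set.union_singleton,
      Set.ncard_insert_of_notMem (by simp [h12.symm]),
      Set.ncard_singleton]
  · simp only [hp1, hp2, hp3, and_self, if_true, if_false, Set.union_empty]
    rw [Set.union_singleton, Set.union_singleton,
      Set.ncard_insert_of_notMem (by simp [h14.symm, h34.symm]),
      Set.ncard_insert_of_notMem (by simp [h13.symm]),
      Set.ncard_singleton]
  · simp only [hp1, hp2, hp3, and_false, if_true, if_false, Set.union_empty]
    rw [Set.union_singleton,
      Set.ncard_insert_of_notMem (by simp [h13.symm]),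
      Set.ncard_singleton]
  · simp only [hp1, hp2, hp3, false_and, if_false, Set.union_empty, Set.ncard_singleton]
  · simp only [hp1, hp2, hp3, false_and, if_false, Set.union_empty, Set.ncard_singleton]

private lemma aux19_singleton_card [Fintype B] (hS : Fintype.card B = 2) (x y : B) (b : W)
    (hb : b ∈ doubleReps cs {x} {y}) :
    Nat.card (Wset cs {x} {y} b) = Nat.card (Wset cs {y} {x} b⁻¹) := by
  classical
  obtain ⟨hbx, hby⟩ := (aux19_mem_doubleReps cs _ _ b).mp hb
  rw [aux19_mem_minReps_singleton] at hbx hby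
  have hb1 : cs.length b < cs.length (cs.simple x * b) := by
    have h1 : cs.length (b⁻¹ * cs.simple x) = cs.length (cs.simple x * b) := by
      rw [← cs.length_inv (cs.simple x * b)]
      congr 1
      rw [mul_inv_rev, cs.inv_simple]
    have h2 := hbx
    rw [cs.length_inv, h1] at h2
    exact h2
  obtain ⟨φ, hφl, hφx, hφy, hφb⟩ := aux19_key_phi cs hS x y b hb1 hby
  have hφbi : φ b⁻¹ = b := by rw [map_inv, hφb, inv_inv]
  rw [aux19_wset_singleton cs x y b hby, aux19_wset_singleton cs y x b⁻¹ hbx]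
  simp only [inv_inv]
  have hlen2 : ∀ u v : W, cs.length u < cs.length v ↔ cs.length (φ u) < cs.length (φ v) := by
    intro u v
    rw [hφl, hφl]
  have h1 : (cs.length (b * cs.simple y * b⁻¹) < cs.length (b * cs.simple y * b⁻¹ * cs.simple x))
      ↔ (cs.length (b⁻¹ * cs.simple x * b) < cs.length (b⁻¹ * cs.simple x * b * cs.simple y)) := by
    rw [hlen2 (b * cs.simple y * b⁻¹) (b * cs.simple y * b⁻¹ * cs.simple x),
      show φ (b * cs.simple y * b⁻¹) = b⁻¹ * cs.simple x * b by
        rw [map_mul, map_mul, hφb, hφy, hφbi],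
      show φ (b * cs.simple y * b⁻¹ * cs.simple x) = b⁻¹ * cs.simple x * b * cs.simple y by
        rw [map_mul, map_mul, map_mul, hφb, hφy, hφbi, hφx]]
  have h2 : (cs.length (cs.simple x * b) < cs.length (cs.simple x * b * cs.simple y))
      ↔ (cs.length (cs.simple y * b⁻¹) < cs.length (cs.simple y * b⁻¹ * cs.simple x)) := by
    rw [hlen2 (cs.simple x * b) (cs.simple x * b * cs.simple y),
      show φ (cs.simple x * b) = cs.simple y * b⁻¹ by rw [map_mul, hφx, hφb],
      show φ (cs.simple x * b * cs.simple y) = cs.simple y * b⁻¹ * cs.simple x by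
        rw [map_mul, map_mul, hφx, hφb, hφy]]
  have h3 : (cs.length (cs.simple x * b * cs.simple y * (cs.simple x * b)⁻¹)
        < cs.length (cs.simple x * b * cs.simple y * (cs.simple x * b)⁻¹ * cs.simple x))
      ↔ (cs.length (cs.simple y * b⁻¹ * cs.simple x * (cs.simple y * b⁻¹)⁻¹)
        < cs.length (cs.simple y * b⁻¹ * cs.simple x * (cs.simple y * b⁻¹)⁻¹ * cs.simple y)) := by
    have e1 : φ (cs.simple x * b * cs.simple y * (cs.simple x * b)⁻¹)
        = cs.simple y * b⁻¹ * cs.simple x * (cs.simple y * b⁻¹)⁻¹ := by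
      rw [map_mul, map_mul, map_inv, map_mul, hφx, hφb, hφy]
    rw [hlen2 (cs.simple x * b * cs.simple y * (cs.simple x * b)⁻¹)
        (cs.simple x * b * cs.simple y * (cs.simple x * b)⁻¹ * cs.simple x),
      e1, show φ (cs.simple x * b * cs.simple y * (cs.simple x * b)⁻¹ * cs.simple x)
        = cs.simple y * b⁻¹ * cs.simple x * (cs.simple y * b⁻¹)⁻¹ * cs.simple y by
        rw [map_mul, e1, hφx]]
  by_cases hcol : cs.simple x * b = b * cs.simple y
  · -- collision case: both sets are singletons
    have hnp1 : ¬ (cs.length (b * cs.simple y * b⁻¹)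
        < cs.length (b * cs.simple y * b⁻¹ * cs.simple x)) := by
      have hcs : b * cs.simple y * b⁻¹ = cs.simple x := by
        rw [← hcol]
        group
      rw [hcs, cs.simple_mul_simple_self, cs.length_one, cs.length_simple]
      omega
    have hnp2 : ¬ (cs.length (cs.simple x * b) < cs.length (cs.simple x * b * cs.simple y)) := by
      have hcs : cs.simple x * b * cs.simple y = b := by
        rw [hcol, cs.simple_mul_simple_cancel_right]
      rw [hcs]
      omega
    rw [if_neg hnp1, if_neg hnp2, if_neg (fun hq => hnp2 hq.1),
      if_neg (fun hq => hnp1 (h1.mpr hq)), if_neg (fun hq => hnp2 (h2.mpr hq)),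
      if_neg (fun hq => hnp2 (h2.mpr hq.1))]
    simp only [Set.union_empty]
    rw [Nat.card_coe_set_eq, Nat.card_coe_set_eq, Set.ncard_singleton,
      Set.ncard_singleton]
  · -- generic case: count both sides
    have hsy1 : cs.simple y ≠ 1 := aux19_simple_ne_one cs y
    have hsx1 : cs.simple x ≠ 1 := aux19_simple_ne_one cs x
    have hcol' : ¬ (cs.simple y * b⁻¹ = b⁻¹ * cs.simple x) := by
      intro h
      apply hcol
      have h' := congrArg (fun g : W => g⁻¹) h
      simp only [mul_inv_rev, inv_inv, cs.inv_simple] at h'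
      exact h'.symm
    have h12 : b ≠ b * cs.simple y := fun h => hsy1 (left_eq_mul.mp h)
    have h13 : b ≠ cs.simple x * b := fun h => hsx1 (right_eq_mul.mp h)
    have h14 : b ≠ cs.simple x * b * cs.simple y := by
      intro h
      apply hcol
      have h' : b * cs.simple y = cs.simple x * b * cs.simple y * cs.simple y := by rw [← h]
      rw [cs.simple_mul_simple_cancel_right] at h'
      exact h'.symm
    have h23 : b * cs.simple y ≠ cs.simple x * b := fun h => hcol h.symm
    have h24 : b * cs.simple y ≠ cs.simple x * b * cs.simple y := fun h =>
      h13 (mul_right_cancel h)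
    have h34 : cs.simple x * b ≠ cs.simple x * b * cs.simple y := fun h =>
      hsy1 (left_eq_mul.mp h)
    have m12 : b⁻¹ ≠ b⁻¹ * cs.simple x := fun h => hsx1 (left_eq_mul.mp h)
    have m13 : b⁻¹ ≠ cs.simple y * b⁻¹ := fun h => hsy1 (right_eq_mul.mp h)
    have m14 : b⁻¹ ≠ cs.simple y * b⁻¹ * cs.simple x := by
      intro h
      apply hcol'
      have h' : b⁻¹ * cs.simple x = cs.simple y * b⁻¹ * cs.simple x * cs.simple x := by
        rw [← h]
      rw [cs.simple_mul_simple_cancel_right] at h'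
      exact h'.symm
    have m23 : b⁻¹ * cs.simple x ≠ cs.simple y * b⁻¹ := fun h => hcol' h.symm
    have m24 : b⁻¹ * cs.simple x ≠ cs.simple y * b⁻¹ * cs.simple x := fun h =>
      m13 (mul_right_cancel h)
    have m34 : cs.simple y * b⁻¹ ≠ cs.simple y * b⁻¹ * cs.simple x := fun h =>
      hsx1 (left_eq_mul.mp h)
    rw [aux19_quad_card b (b * cs.simple y) (cs.simple x * b) (cs.simple x * b * cs.simple y)
        (cs.length (b * cs.simple y * b⁻¹) < cs.length (b * cs.simple y * b⁻¹ * cs.simple x))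
        (cs.length (cs.simple x * b) < cs.length (cs.simple x * b * cs.simple y))
        (cs.length (cs.simple x * b * cs.simple y * (cs.simple x * b)⁻¹)
          < cs.length (cs.simple x * b * cs.simple y * (cs.simple x * b)⁻¹ * cs.simple x))
        h12 h13 h14 h23 h24 h34,
      aux19_quad_card b⁻¹ (b⁻¹ * cs.simple x) (cs.simple y * b⁻¹)
        (cs.simple y * b⁻¹ * cs.simple x)
        (cs.length (b⁻¹ * cs.simple x * b) < cs.length (b⁻¹ * cs.simple x * b * cs.simple y))
        (cs.length (cs.simple y * b⁻¹) < cs.length (cs.simple y * b⁻¹ * cs.simple x))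
        (cs.length (cs.simple y * b⁻¹ * cs.simple x * (cs.simple y * b⁻¹)⁻¹)
          < cs.length (cs.simple y * b⁻¹ * cs.simple x * (cs.simple y * b⁻¹)⁻¹ * cs.simple y))
        m12 m13 m14 m23 m24 m34]
    simp only [h1, h2, h3]

private lemma aux19_set_cases [Fintype B] (hS : Fintype.card B = 2) (I : Set B) :
    I = ∅ ∨ (∃ x, I = {x}) ∨ I = Set.univ := by
  by_cases h0 : I = ∅
  · exact Or.inl h0
  · obtain ⟨x, hx⟩ := Set.nonempty_iff_ne_empty.mpr h0
    by_cases h1 : ∃ z ∈ I, z ≠ x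
    · obtain ⟨z, hzI, hzx⟩ := h1
      right; right
      ext a
      simp only [Set.mem_univ, iff_true]
      rcases aux19_cover hS (Ne.symm hzx) a with rfl | rfl
      · exact hx
      · exact hzI
    · push_neg at h1
      right; left
      exact ⟨x, Set.eq_singleton_iff_unique_mem.mpr ⟨hx, h1⟩⟩

end Aux19
/-- For a finite dihedral Coxeter system (`|S| = 2`), the double coset
conjecture holds: `|W(I,J,b)| = |W(J,I,b⁻¹)|` for all `I, J ⊆ S` and `b ∈ X_{IJ}`. -/
theorem statement19 [Fintype W] [Fintype B] (cs : CoxeterSystem M W)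
    (hS : Fintype.card B = 2) :
    ∀ (I J : Set B), ∀ b ∈ doubleReps cs I J,
      Nat.card (Wset cs I J b) = Nat.card (Wset cs J I b⁻¹) := by
  intro I J b hb
  obtain ⟨hbI, hbJ⟩ := (aux19_mem_doubleReps cs I J b).mp hb
  rcases aux19_set_cases hS I with rfl | ⟨x, rfl⟩ | rfl
  · rw [aux19_wset_left_empty cs J b hbJ, aux19_wset_right_empty cs J b⁻¹]
    rw [Nat.card_coe_set_eq, Nat.card_coe_set_eq,
      Set.ncard_image_of_injective _ (mul_right_injective b),
      Set.ncard_image_of_injective _ (mul_left_injective b⁻¹)]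
  · rcases aux19_set_cases hS J with rfl | ⟨y, rfl⟩ | rfl
    · rw [aux19_wset_right_empty cs _ b, aux19_wset_left_empty cs _ b⁻¹ hbI]
      rw [Nat.card_coe_set_eq, Nat.card_coe_set_eq,
        Set.ncard_image_of_injective _ (mul_left_injective b),
        Set.ncard_image_of_injective _ (mul_right_injective b⁻¹)]
    · exact aux19_singleton_card cs hS x y b hb
    · have hb1 : b = 1 := by
        have h := hbJ
        rw [aux19_minReps_univ] at h
        simpa using h
      subst hb1
      rw [inv_one, aux19_wset_right_univ, aux19_wset_left_univ]
  · have hb1 : b = 1 := by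
      have h := hbI
      rw [aux19_minReps_univ] at h
      simpa using h
    subst hb1
    rw [inv_one, aux19_wset_left_univ, aux19_wset_right_univ]
end
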